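/- Let F be a field of characteristic different from 2, V a finite-dimensional F-vector space, and Q a nondegenerate quadratic form on V. If v, e ∈ V satisfy Q(v) = Q(e) and Q(e) ≠ 0, then there exists a linear automorphism f of V which is an isometry of Q (i.e. Q(f(x)) = Q(x) for all x ∈ V) such that f(e) = v. Equivalently (Witt's theorem), the orthogonal group O(V,Q) acts transitively on each level set Y = {v ∈ V : Q(v) = c} with c ≠ 0. -/

import Mathlib

open QuadraticMap

/-- Reflection in a vector `w` with `Q w ≠ 0` is an isometric automorphism, with explicit
formula. -/
private lemma witt_refl {F V : Type*} [Field F] [AddCommGroup V] [Module F V]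
    (Q : QuadraticForm F V) (w : V) (hw : Q w ≠ 0) :
    ∃ f : V ≃ₗ[F] V, (∀ x : V, Q (f x) = Q x) ∧
      ∀ x : V, f x = x - (polar Q x w / Q w) • w := by
  set g : V →ₗ[F] V :=
    LinearMap.id - LinearMap.smulRight ((Q w)⁻¹ • Q.polarBilin.flip w) w with hg
  have hgx : ∀ x : V, g x = x - (polar Q x w / Q w) • w := by
    intro x
    simp [hg, div_eq_inv_mul, mul_smul, polar_comm Q w x]
  have hpol : ∀ x : V, polar Q (g x) w = - polar Q x w := by
    intro x
    rw [hgx, polar_sub_left, polar_smul_left, polar_self, two_nsmul, smul_eq_mul]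
    field_simp
    ring
  have hinv : Function.Involutive g := by
    intro x
    rw [hgx (g x), hpol, hgx]
    simp [neg_div, sub_smul, neg_smul]
  have hiso : ∀ x : V, Q (g x) = Q x := by
    intro x
    rw [hgx]
    set y := (polar Q x w / Q w) • w with hy
    have hexp : Q (x - y) = Q x + Q y - polar Q x y := by
      have h : polar Q x (-y) = Q (x + -y) - Q x - Q (-y) := rfl
      rw [polar_neg_right, QuadraticMap.map_neg] at h
      rw [sub_eq_add_neg]
      linear_combination -h
    rw [hexp, hy, QuadraticMap.map_smul, polar_smul_right]
    field_simp
    linear_combination (polar Q x w ^ 2 * (Q w)⁻¹) * (mul_inv_cancel₀ hw)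
  refine ⟨LinearEquiv.ofInvolutive g hinv, hiso, hgx⟩

/-- **Witt's theorem** (transitivity on nonzero level sets).
Let `F` be a field of characteristic different from 2, `V` a finite-dimensional `F`-vector
space, and `Q` a nondegenerate quadratic form on `V`. If `v, e ∈ V` satisfy `Q v = Q e` and
`Q e ≠ 0`, then there exists a linear automorphism `f` of `V` which is an isometry of `Q`
(i.e. `Q (f x) = Q x` for all `x`) such that `f e = v`. -/
theorem witt_transitive_on_level_sets
    {F V : Type*} [Field F] [AddCommGroup V] [Module F V] [FiniteDimensional F V]
    (hchar : (2 : F) ≠ 0)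
    (Q : QuadraticForm F V) (hQ : Q.polarBilin.Nondegenerate)
    (v e : V) (hve : Q v = Q e) (he : Q e ≠ 0) :
    ∃ f : V ≃ₗ[F] V, (∀ x : V, Q (f x) = Q x) ∧ f e = v := by
  have hQsub : Q (v - e) = 2 * Q e - polar Q v e := by
    have : polar Q v (-e) = Q (v + -e) - Q v - Q (-e) := rfl
    rw [polar_neg_right] at this
    rw [show v - e = v + -e from (sub_eq_add_neg v e)]
    simp only [QuadraticMap.map_neg] at this
    rw [hve] at this
    linear_combination -this
  have hQadd : Q (v + e) = 2 * Q e + polar Q v e := by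
    have : polar Q v e = Q (v + e) - Q v - Q e := rfl
    rw [hve] at this
    linear_combination -this
  by_cases h1 : Q (v - e) ≠ 0
  · obtain ⟨f, hiso, hform⟩ := witt_refl Q (v - e) h1
    refine ⟨f, hiso, ?_⟩
    rw [hform e]
    have hpe : polar Q e (v - e) = - Q (v - e) := by
      rw [polar_sub_right, polar_self, polar_comm, hQsub, two_nsmul]
      ring
    rw [hpe, neg_div, div_self h1, neg_smul, one_smul, sub_neg_eq_add]
    abel
  · push_neg at h1
    have h2 : Q (v + e) ≠ 0 := by
      intro h2
      rw [hQsub] at h1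
      rw [hQadd] at h2
      have : (2 : F) * (2 * Q e) = 0 := by linear_combination h1 + h2
      rcases mul_eq_zero.mp this with h | h
      · exact hchar h
      · rcases mul_eq_zero.mp h with h | h
        exacts [hchar h, he h]
    obtain ⟨f, hiso, hform⟩ := witt_refl Q (v + e) h2
    refine ⟨f.trans (LinearEquiv.neg F), fun x => by simpa using hiso x, ?_⟩
    have hpe : polar Q e (v + e) = Q (v + e) := by
      rw [polar_add_right, polar_self, polar_comm, hQadd, two_nsmul]
      ring
    have : f e = -v := by
      rw [hform e, hpe, div_self h2, one_smul]
      abel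
    simp [this]
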